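/- arXiv:2205.06038 — 3 statements merged into one kernel-verified Lean document; each statement's English description precedes it below -/
import Mathlib

section
/- For j_1, …, j_k ≥ 0, the generating function ∑_{𝛌∈W} q^{|𝛌|}, where W is the set of k-tuples of strict partitions with ℓ(λ^{(i)}) = j_i + ⋯ + j_k whose last ℓ(λ^{(i+1)}) parts form the staircase Δ_{ℓ(λ^{(i+1)})} (for 1 ≤ i < k), equals ∏_{a=1}^k q^{T(j_a+⋯+j_k)} / (q;q)_{j_a}, where T(m) = m(m+1)/2. -/
open Finset PowerSeries

/-- A strict partition: a strictly decreasing finite list of positive integers. -/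
structure StrictPartition where
  parts : List ℕ
  pos : ∀ p ∈ parts, 0 < p
  sorted : parts.Pairwise (· > ·)

namespace StrictPartition

/-- The size `|λ|`. -/
def size (μ : StrictPartition) : ℕ := μ.parts.sum

/-- The number of parts `ℓ(λ)`. -/
def len (μ : StrictPartition) : ℕ := μ.parts.length

/-- The largest part `λ₁` (`0` if `λ` is empty). -/
def first (μ : StrictPartition) : ℕ := μ.parts.headI

end StrictPartition

/-- `(q;q)_n = ∏_{0 ≤ j < n} (1 - q^{j+1})`. -/
noncomputable def qPoch (n : ℕ) : PowerSeries ℚ :=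
  ∏ j ∈ Finset.range n, (1 - (PowerSeries.X : PowerSeries ℚ) ^ (j + 1))

/-- The staircase `Δ_m = (m, m-1, …, 1)` as a list. -/
def staircase (m : ℕ) : List ℕ := (List.range m).reverse.map (· + 1)

namespace Wgf

/-- weight of a multiplicity vector -/
def wt {m : ℕ} (g : Fin m → ℕ) : ℕ := ∑ t, (t.val + 1) * g t

def gext (m : ℕ) (g : Fin m → ℕ) : ℕ → ℕ := fun t => if h : t < m then g ⟨t, h⟩ else 0

def csum (m : ℕ) (g : Fin m → ℕ) (i : ℕ) : ℕ := ∑ t ∈ Finset.Ico i m, gext m g t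

lemma csum_of_ge {m : ℕ} (g : Fin m → ℕ) {i : ℕ} (h : m ≤ i) : csum m g i = 0 := by
  rw [csum, Finset.Ico_eq_empty (by omega), Finset.sum_empty]

lemma csum_succ_le {m : ℕ} (g : Fin m → ℕ) (i : ℕ) : csum m g (i + 1) ≤ csum m g i :=
  Finset.sum_le_sum_of_subset (Finset.Ico_subset_Ico (by omega) le_rfl)

lemma csum_eq {m : ℕ} (g : Fin m → ℕ) {i : ℕ} (h : i < m) :
    csum m g i = gext m g i + csum m g (i + 1) :=
  Finset.sum_eq_sum_Ico_succ_bot h _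

lemma csum_antitone {m : ℕ} (g : Fin m → ℕ) {i j : ℕ} (h : i ≤ j) :
    csum m g j ≤ csum m g i :=
  Finset.sum_le_sum_of_subset (Finset.Ico_subset_Ico h le_rfl)

/-- the list of parts built from a multiplicity vector -/
def toList (m n : ℕ) (g : Fin m → ℕ) : List ℕ :=
  List.ofFn fun i : Fin (m + n) => (m + n - i.val) + csum m g i.val

lemma toList_length (m n : ℕ) (g : Fin m → ℕ) : (toList m n g).length = m + n := by
  simp [toList]

lemma toList_getElem (m n : ℕ) (g : Fin m → ℕ) {i : ℕ} (h : i < m + n) :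
    (toList m n g)[i]'(by simp [toList_length, h]) = (m + n - i) + csum m g i := by
  simp [toList]

lemma toList_sorted (m n : ℕ) (g : Fin m → ℕ) : (toList m n g).Pairwise (· > ·) := by
  rw [toList, List.pairwise_ofFn]
  intro i j hij
  have h1 : csum m g j.val ≤ csum m g i.val := csum_antitone g (le_of_lt hij)
  have := j.isLt
  have := i.isLt
  have hij' : i.val < j.val := hij
  simp only [gt_iff_lt]
  omega

lemma toList_pos (m n : ℕ) (g : Fin m → ℕ) : ∀ p ∈ toList m n g, 0 < p := by
  intro p hp
  rw [toList, List.mem_ofFn] at hp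
  obtain ⟨i, rfl⟩ := hp
  show 0 < (m + n - i.val) + csum m g i.val
  have h := i.isLt
  omega

lemma staircase_length (n : ℕ) : (staircase n).length = n := by simp [staircase]

lemma staircase_getElem (n : ℕ) {i : ℕ} (h : i < n) :
    (staircase n)[i]'(by simp [staircase_length, h]) = n - i := by
  simp [staircase]
  omega

lemma toList_drop (m n : ℕ) (g : Fin m → ℕ) : (toList m n g).drop m = staircase n := by
  apply List.ext_getElem
  · simp [toList_length, staircase_length]
  · intro i h1 h2
    rw [List.getElem_drop]
    have hi : i < n := by simpa [staircase_length] using h2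
    rw [toList_getElem m n g (by omega), staircase_getElem n hi, csum_of_ge g (by omega)]
    omega

lemma sum_range_sub (M : ℕ) : ∑ i ∈ Finset.range M, (M - i) = M * (M + 1) / 2 := by
  rw [← Finset.sum_range_reflect (fun i => M - i) M]
  have h1 : ∀ i ∈ Finset.range M, M - (M - 1 - i) = i + 1 := fun i hi => by
    have := Finset.mem_range.mp hi; omega
  rw [Finset.sum_congr rfl h1]
  have h2 : ∑ i ∈ Finset.range M, (i + 1) = ∑ i ∈ Finset.range (M + 1), i := by
    rw [Finset.sum_range_succ' (fun i => i) M]; simp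
  rw [h2, Finset.sum_range_id, Nat.add_sub_cancel, Nat.mul_comm]

lemma sum_csum (m n : ℕ) (g : Fin m → ℕ) :
    ∑ i ∈ Finset.range (m + n), csum m g i = wt g := by
  classical
  have hrw : ∀ i, csum m g i = ∑ t ∈ Finset.range m, if i ≤ t then gext m g t else 0 := by
    intro i
    rw [csum, ← Finset.sum_filter]
    congr 1
    ext t
    simp [Finset.mem_Ico, Finset.mem_filter, Finset.mem_range]
    omega
  simp_rw [hrw]
  rw [Finset.sum_comm]
  have h2 : ∀ t ∈ Finset.range m,
      (∑ i ∈ Finset.range (m + n), if i ≤ t then gext m g t else 0) = (t + 1) * gext m g t := by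
    intro t ht
    rw [← Finset.sum_filter]
    have : Finset.filter (fun i => i ≤ t) (Finset.range (m + n)) = Finset.range (t + 1) := by
      ext i
      simp only [Finset.mem_filter, Finset.mem_range]
      have := Finset.mem_range.mp ht
      omega
    rw [this, Finset.sum_const, Finset.card_range, smul_eq_mul]
  rw [Finset.sum_congr rfl h2, wt, ← Fin.sum_univ_eq_sum_range (fun t => (t + 1) * gext m g t) m]
  apply Finset.sum_congr rfl
  intro t _
  simp [gext, t.isLt]

lemma toList_sum (m n : ℕ) (g : Fin m → ℕ) :
    (toList m n g).sum = (m + n) * (m + n + 1) / 2 + wt g := by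
  rw [toList, List.sum_ofFn, Finset.sum_add_distrib,
    Fin.sum_univ_eq_sum_range (fun i => m + n - i) (m + n),
    Fin.sum_univ_eq_sum_range (fun i => csum m g i) (m + n),
    sum_range_sub, sum_csum]

end Wgf

namespace Wgf

lemma sp_ext {μ ν : StrictPartition} (h : μ.parts = ν.parts) : μ = ν := by
  cases μ; cases ν; simpa using h

section inverse

variable {μ : StrictPartition} {m n : ℕ}

/-- the multiplicity vector of a strict partition -/
def gOf (μ : StrictPartition) (m : ℕ) : Fin m → ℕ :=
  fun t => μ.parts.getD t.val 0 - μ.parts.getD (t.val + 1) 0 - 1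

lemma getD_pos (hlen : μ.len = m + n) {i : ℕ} (hi : i < m + n) : 1 ≤ μ.parts.getD i 0 := by
  have hl : i < μ.parts.length := by rw [show μ.parts.length = m + n from hlen]; exact hi
  rw [List.getD_eq_getElem _ _ hl]
  exact μ.pos _ (List.getElem_mem hl)

lemma getD_stair (hlen : μ.len = m + n) (hdrop : μ.parts.drop m = staircase n)
    {i : ℕ} (hm : m ≤ i) (hi : i < m + n) : μ.parts.getD i 0 = m + n - i := by
  obtain ⟨r, rfl⟩ : ∃ r, i = m + r := ⟨i - m, by omega⟩
  have hlen' : μ.parts.length = m + n := hlen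
  have hr : r < n := by omega
  have h1 : r < (μ.parts.drop m).length := by simp [hlen']; omega
  have h2 : (μ.parts.drop m)[r]'h1 = μ.parts[m + r]'(by omega) := List.getElem_drop
  rw [List.getD_eq_getElem _ _ (by omega), ← h2]
  have h3 : (μ.parts.drop m)[r]'h1 = (staircase n)[r]'(by rw [staircase_length]; exact hr) := by
    congr 1
  rw [h3, staircase_getElem n hr]
  omega

lemma getD_succ_lt (hlen : μ.len = m + n) {i : ℕ} (hi : i + 1 < m + n) :
    μ.parts.getD (i + 1) 0 < μ.parts.getD i 0 := by
  have hlen' : μ.parts.length = m + n := hlen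
  rw [List.getD_eq_getElem _ _ (by omega), List.getD_eq_getElem _ _ (by omega)]
  exact List.pairwise_iff_getElem.mp μ.sorted i (i + 1) (by omega) (by omega) (by omega)

lemma getD_eq_csum (hlen : μ.len = m + n) (hdrop : μ.parts.drop m = staircase n) :
    ∀ d i, i + d = m → μ.parts.getD i 0 = (m + n - i) + csum m (gOf μ m) i := by
  intro d
  induction d with
  | zero =>
    intro i hi
    have : i = m := by omega
    subst this
    rw [csum_of_ge _ le_rfl]
    rcases Nat.eq_zero_or_pos n with h | h
    · rw [List.getD_eq_default _ _ (by rw [show μ.parts.length = i + n from hlen]; omega)]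
      omega
    · rw [getD_stair hlen hdrop le_rfl (by omega)]
      omega
  | succ d ih =>
    intro i hi
    have him : i < m := by omega
    have hIH := ih (i + 1) (by omega)
    have hcs : csum m (gOf μ m) i = gOf μ m ⟨i, him⟩ + csum m (gOf μ m) (i + 1) := by
      rw [csum_eq _ him]; congr 1; simp [gext, him]
    have hlt : μ.parts.getD (i + 1) 0 < μ.parts.getD i 0 := by
      rcases Nat.lt_or_ge (i + 1) (m + n) with h | h
      · exact getD_succ_lt hlen h
      · have h0 : μ.parts.getD (i + 1) 0 = 0 :=
          List.getD_eq_default _ _ (by rw [show μ.parts.length = m + n from hlen]; omega)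
        have h1 := getD_pos hlen (show i < m + n by omega)
        omega
    rw [hcs]
    show μ.parts.getD i 0 =
      (m + n - i) + ((μ.parts.getD i 0 - μ.parts.getD (i + 1) 0 - 1) + csum m (gOf μ m) (i + 1))
    omega

lemma toList_gOf (hlen : μ.len = m + n) (hdrop : μ.parts.drop m = staircase n) :
    toList m n (gOf μ m) = μ.parts := by
  have hlen' : μ.parts.length = m + n := hlen
  apply List.ext_getElem (by rw [toList_length, hlen'])
  intro i h1 h2
  have hi : i < m + n := by omega
  rw [toList_getElem m n _ hi, ← List.getD_eq_getElem _ 0 h2]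
  rcases Nat.lt_or_ge i m with h | h
  · rw [getD_eq_csum hlen hdrop (m - i) i (by omega)]
  · rw [getD_stair hlen hdrop h hi, csum_of_ge _ h]
    omega

lemma size_gOf (hlen : μ.len = m + n) (hdrop : μ.parts.drop m = staircase n) :
    μ.size = (m + n) * (m + n + 1) / 2 + wt (gOf μ m) := by
  rw [StrictPartition.size, ← toList_gOf hlen hdrop, toList_sum]

end inverse

/-- the key equivalence for a single component -/
def equivA (m n N : ℕ) :
    {μ : StrictPartition // μ.len = m + n ∧ μ.parts.drop m = staircase n ∧ μ.size = N} ≃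
    {g : Fin m → ℕ // (m + n) * (m + n + 1) / 2 + wt g = N} where
  toFun x := ⟨gOf x.1 m, by
    obtain ⟨h1, h2, h3⟩ := x.2
    rw [← size_gOf h1 h2]; exact h3⟩
  invFun g := ⟨⟨toList m n g.1, toList_pos m n g.1, toList_sorted m n g.1⟩,
    toList_length m n g.1, toList_drop m n g.1, by
      show (toList m n g.1).sum = N
      rw [toList_sum]; exact g.2⟩
  left_inv x := Subtype.ext (sp_ext (by
    obtain ⟨h1, h2, h3⟩ := x.2
    exact toList_gOf h1 h2))
  right_inv g := Subtype.ext (by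
    funext t
    show gOf _ m t = g.1 t
    have hlen : (toList m n g.1).length = m + n := toList_length m n g.1
    have htm : t.val < m + n := by have := t.isLt; omega
    rw [gOf]
    simp only
    rw [List.getD_eq_getElem _ 0 (by omega), toList_getElem m n g.1 htm]
    have hcs : csum m g.1 t.val = gext m g.1 t.val + csum m g.1 (t.val + 1) :=
      csum_eq _ t.isLt
    have hg : gext m g.1 t.val = g.1 t := by simp [gext, t.isLt]
    rcases Nat.lt_or_ge (t.val + 1) (m + n) with h | h
    · rw [List.getD_eq_getElem _ 0 (by omega), toList_getElem m n g.1 h]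
      have := csum_succ_le g.1 t.val
      omega
    · rw [List.getD_eq_default _ _ (by omega)]
      have hc0 : csum m g.1 (t.val + 1) = 0 := csum_of_ge _ (by have := t.isLt; omega)
      omega)

end Wgf

namespace Wgf

lemma nat_card_sigma {ι : Type*} [Fintype ι] (f : ι → Type*) [∀ i, Finite (f i)] :
    Nat.card (Sigma f) = ∑ i, Nat.card (f i) := by
  letI : ∀ i, Fintype (f i) := fun i => Fintype.ofFinite _
  simp [Nat.card_eq_fintype_card, Fintype.card_sigma]

lemma wt_le {m : ℕ} (g : Fin m → ℕ) (t : Fin m) : g t ≤ wt g := by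
  have h1 : g t ≤ (t.val + 1) * g t := Nat.le_mul_of_pos_left (g t) (by omega)
  have h2 : (t.val + 1) * g t ≤ wt g :=
    Finset.single_le_sum (f := fun s : Fin m => (s.val + 1) * g s)
      (fun _ _ => Nat.zero_le _) (Finset.mem_univ t)
  omega

instance wt_finite (m w N : ℕ) : Finite {g : Fin m → ℕ // w + wt g = N} := by
  apply Finite.of_injective
    (fun x : {g : Fin m → ℕ // w + wt g = N} =>
      fun t => (⟨x.1 t, by
        have h1 := wt_le x.1 t
        have h2 := x.2
        omega⟩ : Fin (N + 1)))
  intro a b h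
  apply Subtype.ext; funext t
  have := congrFun h t
  simpa using this

instance wt_finite' (m N : ℕ) : Finite {g : Fin m → ℕ // wt g = N} := by
  apply Finite.of_injective
    (fun x : {g : Fin m → ℕ // wt g = N} =>
      (⟨x.1, by simpa using x.2⟩ : {g : Fin m → ℕ // 0 + wt g = N}))
  intro a b h
  apply Subtype.ext
  simpa [Subtype.ext_iff] using h

instance mul_finite (e p : ℕ) : Finite {d : ℕ // (e + 1) * d = p} := by
  apply Finite.of_injective
    (fun x : {d : ℕ // (e + 1) * d = p} => (⟨x.1, by have := x.2; nlinarith [x.2]⟩ : Fin (p + 1)))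
  intro a b h
  apply Subtype.ext
  simpa using h

/-- generic convolution of counting functions -/
lemma card_conv {A B : Type*} (f : A → ℕ) (h : B → ℕ)
    [hA : ∀ p, Finite {a : A // f a = p}] [hB : ∀ p, Finite {b : B // h b = p}] (N : ℕ) :
    (Nat.card {x : A × B // f x.1 + h x.2 = N} : ℚ) =
      ∑ pq ∈ Finset.HasAntidiagonal.antidiagonal N,
        (Nat.card {a : A // f a = pq.1} : ℚ) * (Nat.card {b : B // h b = pq.2} : ℚ) := by
  have E : {x : A × B // f x.1 + h x.2 = N} ≃
      Σ pq : Finset.HasAntidiagonal.antidiagonal N, ({a : A // f a = pq.1.1} × {b : B // h b = pq.1.2}) := by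
    refine ⟨fun x => ⟨⟨(f x.1.1, h x.1.2), Finset.HasAntidiagonal.mem_antidiagonal.mpr x.2⟩,
      ⟨x.1.1, rfl⟩, ⟨x.1.2, rfl⟩⟩,
      fun s => ⟨(s.2.1.1, s.2.2.1), by
        rw [s.2.1.2, s.2.2.2]; exact Finset.HasAntidiagonal.mem_antidiagonal.mp s.1.2⟩, fun x => rfl, ?_⟩
    rintro ⟨⟨⟨p, q⟩, hpq⟩, ⟨a, ha⟩, ⟨b, hb⟩⟩
    dsimp only at ha hb
    subst ha; subst hb
    rfl
  rw [Nat.card_congr E, nat_card_sigma]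
  push_cast
  rw [← Finset.sum_coe_sort (Finset.HasAntidiagonal.antidiagonal N)
    (fun pq => (Nat.card {a : A // f a = pq.1} : ℚ) * (Nat.card {b : B // h b = pq.2} : ℚ))]
  apply Finset.sum_congr rfl
  intro pq _
  rw [Nat.card_prod]
  push_cast
  ring

lemma card_mul_eq (e q : ℕ) :
    (Nat.card {d : ℕ // (e + 1) * d = q} : ℚ) = if (e + 1) ∣ q then 1 else 0 := by
  split_ifs with h
  · obtain ⟨c, rfl⟩ := h
    haveI : Unique {d : ℕ // (e + 1) * d = (e + 1) * c} :=
      ⟨⟨⟨c, rfl⟩⟩, fun x => Subtype.ext (Nat.eq_of_mul_eq_mul_left (by omega) x.2)⟩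
    rw [Nat.card_unique]; norm_num
  · haveI : IsEmpty {d : ℕ // (e + 1) * d = q} := ⟨fun x => h ⟨x.1, x.2.symm⟩⟩
    rw [Nat.card_of_isEmpty]; norm_num

lemma geom (d : ℕ) :
    ((1 - (PowerSeries.X : PowerSeries ℚ) ^ (d + 1))⁻¹) =
      PowerSeries.mk (fun N => if (d + 1) ∣ N then 1 else 0) := by
  rw [eq_comm, PowerSeries.eq_inv_iff_mul_eq_one (by simp)]
  ext N
  rw [mul_sub, mul_one, map_sub, mul_comm _ ((PowerSeries.X : PowerSeries ℚ) ^ (d + 1)),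
    PowerSeries.coeff_X_pow_mul', PowerSeries.coeff_one]
  simp only [PowerSeries.coeff_mk]
  by_cases hN : N = 0
  · subst hN; simp
  · by_cases hle : d + 1 ≤ N
    · have hiff : ((d + 1) ∣ N) ↔ ((d + 1) ∣ N - (d + 1)) := by
        constructor
        · exact fun h => Nat.dvd_sub h dvd_rfl
        · intro h
          have hEq : N = (N - (d + 1)) + (d + 1) := by omega
          rw [hEq]; exact Nat.dvd_add h dvd_rfl
      rw [if_pos hle, if_neg hN]
      by_cases hd : (d + 1) ∣ N
      · rw [if_pos hd, if_pos (hiff.mp hd)]; ring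
      · rw [if_neg hd, if_neg (fun hc => hd (hiff.mpr hc))]; ring
    · have hd : ¬ (d + 1) ∣ N := fun hc => by
        have := Nat.le_of_dvd (by omega) hc; omega
      rw [if_neg hd, if_neg hle, if_neg hN, sub_zero]

end Wgf

namespace Wgf

lemma wt_succ_eq {m : ℕ} (g : Fin (m + 1) → ℕ) :
    wt g = wt (Fin.init g) + (m + 1) * g (Fin.last m) := by
  rw [wt, Fin.sum_univ_castSucc]
  rfl

def equiv_succ (m N : ℕ) :
    {g : Fin (m + 1) → ℕ // wt g = N} ≃
    {x : (Fin m → ℕ) × ℕ // wt x.1 + (m + 1) * x.2 = N} where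
  toFun g := ⟨(Fin.init g.1, g.1 (Fin.last m)), by rw [← wt_succ_eq]; exact g.2⟩
  invFun x := ⟨Fin.snoc x.1.1 x.1.2, by
    rw [wt_succ_eq, Fin.init_snoc, Fin.snoc_last]; exact x.2⟩
  left_inv g := Subtype.ext (Fin.snoc_init_self g.1)
  right_inv x := Subtype.ext (by simp)

lemma constCoeff_qPoch (m : ℕ) : (PowerSeries.constantCoeff (R := ℚ)) (qPoch m) = 1 := by
  rw [qPoch, map_prod]
  apply Finset.prod_eq_one
  intro i _
  simp

lemma gf_wt (m : ℕ) :
    PowerSeries.mk (fun N => (Nat.card {g : Fin m → ℕ // wt g = N} : ℚ)) = (qPoch m)⁻¹ := by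
  induction m with
  | zero =>
    have h1 : qPoch 0 = 1 := by rw [qPoch, Finset.prod_range_zero]
    rw [h1, inv_one]
    ext N
    rw [PowerSeries.coeff_mk, PowerSeries.coeff_one]
    rcases Nat.eq_zero_or_pos N with h | h
    · subst h
      haveI : Unique {g : Fin 0 → ℕ // wt g = 0} :=
        ⟨⟨⟨fun t => t.elim0, by simp [wt]⟩⟩,
          fun x => Subtype.ext (funext fun t => t.elim0)⟩
      rw [Nat.card_unique]; norm_num
    · haveI : IsEmpty {g : Fin 0 → ℕ // wt g = N} :=
        ⟨fun x => by have := x.2; simp [wt] at this; omega⟩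
      rw [Nat.card_of_isEmpty, if_neg (by omega)]
      norm_num
  | succ m ih =>
    have key : PowerSeries.mk (fun N => (Nat.card {g : Fin (m + 1) → ℕ // wt g = N} : ℚ)) =
        PowerSeries.mk (fun N => (Nat.card {g : Fin m → ℕ // wt g = N} : ℚ)) *
        PowerSeries.mk (fun N => if (m + 1) ∣ N then (1 : ℚ) else 0) := by
      ext N
      rw [PowerSeries.coeff_mk, PowerSeries.coeff_mul]
      simp only [PowerSeries.coeff_mk]
      rw [Nat.card_congr (equiv_succ m N),
        card_conv (fun g : Fin m → ℕ => wt g) (fun d : ℕ => (m + 1) * d) N]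
      apply Finset.sum_congr rfl
      intro pq _
      rw [card_mul_eq]
    have hq : qPoch (m + 1) = qPoch m * (1 - (PowerSeries.X : PowerSeries ℚ) ^ (m + 1)) :=
      Finset.prod_range_succ _ _
    rw [key, ih, ← geom m]
    rw [hq]
    rw [PowerSeries.eq_inv_iff_mul_eq_one (by
      rw [map_mul, constCoeff_qPoch]
      simp)]
    have h1 : (qPoch m)⁻¹ * qPoch m = 1 :=
      PowerSeries.inv_mul_cancel _ (by rw [constCoeff_qPoch]; norm_num)
    have h2 : (1 - (PowerSeries.X : PowerSeries ℚ) ^ (m + 1))⁻¹ *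
        (1 - (PowerSeries.X : PowerSeries ℚ) ^ (m + 1)) = 1 :=
      PowerSeries.inv_mul_cancel _ (by simp)
    calc (qPoch m)⁻¹ * (1 - (PowerSeries.X : PowerSeries ℚ) ^ (m + 1))⁻¹ *
          (qPoch m * (1 - (PowerSeries.X : PowerSeries ℚ) ^ (m + 1)))
        = ((qPoch m)⁻¹ * qPoch m) *
          ((1 - (PowerSeries.X : PowerSeries ℚ) ^ (m + 1))⁻¹ *
            (1 - (PowerSeries.X : PowerSeries ℚ) ^ (m + 1))) := by ring
      _ = 1 := by rw [h1, h2, mul_one]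

lemma gfA (m n : ℕ) :
    PowerSeries.mk (fun N => (Nat.card {μ : StrictPartition //
        μ.len = m + n ∧ μ.parts.drop m = staircase n ∧ μ.size = N} : ℚ)) =
      (PowerSeries.X : PowerSeries ℚ) ^ ((m + n) * ((m + n) + 1) / 2) * (qPoch m)⁻¹ := by
  rw [← gf_wt]
  ext N
  rw [PowerSeries.coeff_mk, PowerSeries.coeff_X_pow_mul', Nat.card_congr (equivA m n N)]
  set T := (m + n) * ((m + n) + 1) / 2 with hT
  split_ifs with h
  · rw [PowerSeries.coeff_mk]
    congr 1
    rw [Nat.card_congr (Equiv.subtypeEquivRight (q := fun g : Fin m → ℕ => wt g = N - T)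
      (fun g => by omega))]
  · haveI : IsEmpty {g : Fin m → ℕ // (m + n) * ((m + n) + 1) / 2 + wt g = N} :=
      ⟨fun x => by have := x.2; omega⟩
    rw [Nat.card_of_isEmpty]
    norm_num

end Wgf

namespace Wgf

lemma length_le_sum (l : List ℕ) (h : ∀ p ∈ l, 0 < p) : l.length ≤ l.sum := by
  induction l with
  | nil => simp
  | cons x xs ih =>
    simp only [List.length_cons, List.sum_cons]
    have h1 := h x (by simp)
    have h2 := ih (fun p hp => h p (by simp [hp]))
    omega

lemma getD_inj {l1 l2 : List ℕ} (h1 : ∀ p ∈ l1, 0 < p) (h2 : ∀ p ∈ l2, 0 < p)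
    (h : ∀ i, l1.getD i 0 = l2.getD i 0) : l1 = l2 := by
  induction l1 generalizing l2 with
  | nil =>
    cases l2 with
    | nil => rfl
    | cons y ys =>
      have h0 := h 0
      simp at h0
      have := h2 y (by simp)
      omega
  | cons x xs ih =>
    cases l2 with
    | nil =>
      have h0 := h 0
      simp at h0
      have := h1 x (by simp)
      omega
    | cons y ys =>
      have h0 := h 0
      simp at h0
      have hxy : xs = ys := ih (fun p hp => h1 p (by simp [hp]))
        (fun p hp => h2 p (by simp [hp]))
        (fun i => by have := h (i + 1); simpa using this)
      simp [h0, hxy]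

lemma getD_le_size (μ : StrictPartition) (i : ℕ) : μ.parts.getD i 0 ≤ μ.size := by
  rcases Nat.lt_or_ge i μ.parts.length with h | h
  · rw [List.getD_eq_getElem _ _ h]
    exact List.single_le_sum (fun x _ => Nat.zero_le x) _ (List.getElem_mem h)
  · rw [List.getD_eq_default _ _ h]
    exact Nat.zero_le _

instance sp_finite (N : ℕ) : Finite {μ : StrictPartition // μ.size ≤ N} := by
  apply Finite.of_injective (fun x : {μ : StrictPartition // μ.size ≤ N} =>
    fun i : Fin (N + 1) => (⟨x.1.parts.getD i.val 0, by
      have := getD_le_size x.1 i.val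
      have := x.2
      omega⟩ : Fin (N + 1)))
  intro a b hab
  apply Subtype.ext
  apply sp_ext
  apply getD_inj a.1.pos b.1.pos
  intro i
  rcases Nat.lt_or_ge i (N + 1) with h | h
  · have := congrFun hab ⟨i, h⟩
    simpa using this
  · have ha : a.1.parts.length ≤ i :=
      le_trans (le_trans (length_le_sum _ a.1.pos) a.2) (by omega)
    have hb : b.1.parts.length ≤ i :=
      le_trans (le_trans (length_le_sum _ b.1.pos) b.2) (by omega)
    rw [List.getD_eq_default _ _ ha, List.getD_eq_default _ _ hb]

/-- conditions on tuples of strict partitions -/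
def Conds (k : ℕ) (j : ℕ → ℕ) (L : Fin k → StrictPartition) : Prop :=
  (∀ a : Fin k, (L a).len = ∑ b ∈ Finset.Ico a.val k, j b) ∧
  (∀ (a : Fin k) (h : a.val + 1 < k),
    (L a).parts.drop ((L a).len - (L ⟨a.val + 1, h⟩).len) =
      staircase ((L ⟨a.val + 1, h⟩).len))

lemma sum_Ico_shift (j : ℕ → ℕ) (a k : ℕ) :
    ∑ b ∈ Finset.Ico a k, j (b + 1) = ∑ b ∈ Finset.Ico (a + 1) (k + 1), j b := by
  rw [← Finset.map_add_right_Ico a k 1, Finset.sum_map]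
  simp [addRightEmbedding]

lemma sum_Ico_bot (j : ℕ → ℕ) (k : ℕ) :
    ∑ b ∈ Finset.Ico 0 (k + 1), j b = j 0 + ∑ b ∈ Finset.Ico 1 (k + 1), j b :=
  Finset.sum_eq_sum_Ico_succ_bot (by omega) j

section step

variable (k : ℕ) (j : ℕ → ℕ)

/-- head subtype -/
abbrev Hd := {μ : StrictPartition //
  μ.len = j 0 + (∑ b ∈ Finset.Ico 1 (k + 1), j b) ∧
  μ.parts.drop (j 0) = staircase (∑ b ∈ Finset.Ico 1 (k + 1), j b)}

/-- tail subtype -/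
abbrev Tl := {L : Fin k → StrictPartition // Conds k (fun b => j (b + 1)) L}

def stepEquiv (N : ℕ) :
    {L : Fin (k + 1) → StrictPartition // Conds (k + 1) j L ∧ (∑ a, (L a).size) = N} ≃
    {x : Hd k j × Tl k j // x.1.1.size + (∑ a, (x.2.1 a).size) = N} where
  toFun x :=
    ⟨(⟨x.1 0, by
        have h3 := x.2.1.1 0
        simp only [Fin.val_zero] at h3
        rw [h3, sum_Ico_bot], by
        rcases Nat.eq_zero_or_pos k with hk | hk
        · subst hk
          have h1 : (∑ b ∈ Finset.Ico 1 (0 + 1), j b) = 0 := by simp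
          have h3 := x.2.1.1 0
          simp only [Fin.val_zero] at h3
          have h2 : (x.1 0).parts.length = j 0 := by
            have h4 : ∑ b ∈ Finset.Ico (0:ℕ) (0 + 1), j b = j 0 := by simp
            rw [h4] at h3
            exact h3
          rw [h1, show staircase 0 = [] from rfl, ← h2, List.drop_length]
        · have h1 := x.2.1.2 0 (by simp only [Fin.val_zero]; omega)
          have h2 : (x.1 ⟨(0:Fin (k+1)).val + 1, by simp only [Fin.val_zero]; omega⟩).len
              = ∑ b ∈ Finset.Ico 1 (k + 1), j b := by
            have := x.2.1.1 ⟨(0:Fin (k+1)).val + 1, by simp only [Fin.val_zero]; omega⟩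
            rw [this]
            congr 1
          have h3 := x.2.1.1 0
          simp only [Fin.val_zero] at h3
          rw [sum_Ico_bot] at h3
          have h4 : (x.1 0).len - (x.1 ⟨(0:Fin (k+1)).val + 1, by simp only [Fin.val_zero]; omega⟩).len = j 0 := by
            rw [h2, h3]; omega
          rw [← h2, ← h4]
          exact h1⟩,
      ⟨fun a => x.1 a.succ, by
        constructor
        · intro a
          have h5 := x.2.1.1 a.succ
          rw [h5]
          show _ = ∑ b ∈ Finset.Ico a.val k, j (b + 1)
          rw [sum_Ico_shift]
          rfl
        · intro a h
          exact x.2.1.2 a.succ (Nat.succ_lt_succ h)⟩), by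
      have h6 := x.2.2
      rw [Fin.sum_univ_succ] at h6
      exact h6⟩
  invFun x :=
    ⟨Fin.cons x.1.1.1 x.1.2.1, by
      constructor
      · intro a
        refine Fin.cases ?_ ?_ a
        · rw [Fin.cons_zero, x.1.1.2.1]
          simp only [Fin.val_zero]
          rw [sum_Ico_bot]
        · intro a'
          rw [Fin.cons_succ]
          have h5 := x.1.2.2.1 a'
          rw [h5]
          show ∑ b ∈ Finset.Ico a'.val k, j (b + 1) = _
          rw [sum_Ico_shift]
          rfl
      · intro a
        refine Fin.cases ?_ ?_ a
        · intro h
          have hk : 0 < k := by simpa using h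
          have e1 : (⟨(0 : Fin (k+1)).val + 1, h⟩ : Fin (k + 1)) = (⟨0, hk⟩ : Fin k).succ :=
            Fin.ext rfl
          rw [e1, Fin.cons_zero, Fin.cons_succ]
          have h2 : (x.1.2.1 ⟨0, hk⟩).len = ∑ b ∈ Finset.Ico 1 (k + 1), j b := by
            rw [x.1.2.2.1 ⟨0, hk⟩]
            show ∑ b ∈ Finset.Ico 0 k, j (b + 1) = _
            rw [sum_Ico_shift]
          rw [h2]
          have h4 : x.1.1.1.len - (∑ b ∈ Finset.Ico 1 (k + 1), j b) = j 0 := by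
            rw [x.1.1.2.1]; omega
          rw [h4]
          exact x.1.1.2.2
        · intro a' h
          have hk : a'.val + 1 < k := by simpa using h
          have e1 : (⟨(a'.succ : Fin (k+1)).val + 1, h⟩ : Fin (k + 1))
              = (⟨a'.val + 1, hk⟩ : Fin k).succ := Fin.ext rfl
          rw [e1, Fin.cons_succ, Fin.cons_succ]
          exact x.1.2.2.2 a' hk, by
      rw [Fin.sum_univ_succ, Fin.cons_zero]
      have h7 := x.2
      simp only [Fin.cons_succ]
      exact h7⟩
  left_inv x := Subtype.ext (Fin.cons_self_tail x.1)
  right_inv x := by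
    apply Subtype.ext
    refine Prod.ext ?_ ?_
    · apply Subtype.ext
      simp
    · apply Subtype.ext
      funext a
      simp

end step

end Wgf

namespace Wgf

lemma master (k : ℕ) (j : ℕ → ℕ) :
    PowerSeries.mk (fun N =>
        (Nat.card {L : Fin k → StrictPartition //
          Conds k j L ∧ (∑ a, (L a).size) = N} : ℚ)) =
      ∏ a ∈ Finset.range k,
        (PowerSeries.X : PowerSeries ℚ) ^
            ((∑ b ∈ Finset.Ico a k, j b) * ((∑ b ∈ Finset.Ico a k, j b) + 1) / 2) *
          (qPoch (j a))⁻¹ := by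
  induction k generalizing j with
  | zero =>
    rw [Finset.prod_range_zero]
    ext N
    rw [PowerSeries.coeff_mk, PowerSeries.coeff_one]
    rcases Nat.eq_zero_or_pos N with h | h
    · subst h
      haveI : Unique {L : Fin 0 → StrictPartition //
          Conds 0 j L ∧ (∑ a, (L a).size) = 0} :=
        ⟨⟨⟨fun a => a.elim0, ⟨fun a => a.elim0, fun a h => a.elim0⟩, by simp⟩⟩,
          fun x => Subtype.ext (funext fun a => a.elim0)⟩
      rw [Nat.card_unique]
      norm_num
    · haveI : IsEmpty {L : Fin 0 → StrictPartition //
          Conds 0 j L ∧ (∑ a, (L a).size) = N} :=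
        ⟨fun x => by
          have := x.2.2
          simp at this
          omega⟩
      rw [Nat.card_of_isEmpty, if_neg (by omega)]
      norm_num
  | succ k ih =>
    haveI instHd : ∀ p : ℕ, Finite {a : Hd k j // a.1.size = p} := by
      intro p
      apply Finite.of_injective (fun x : {a : Hd k j // a.1.size = p} =>
        (⟨x.1.1, by rw [x.2]⟩ : {μ : StrictPartition // μ.size ≤ p}))
      intro a b h
      apply Subtype.ext
      apply Subtype.ext
      simpa [Subtype.ext_iff] using h
    haveI instTl : ∀ p : ℕ, Finite {b : Tl k j // (∑ a, (b.1 a).size) = p} := by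
      intro p
      apply Finite.of_injective (fun x : {b : Tl k j // (∑ a, (b.1 a).size) = p} =>
        fun a => (⟨x.1.1 a, by
          have h1 : (x.1.1 a).size ≤ ∑ a', (x.1.1 a').size :=
            Finset.single_le_sum (f := fun a' : Fin k => (x.1.1 a').size)
              (fun i _ => Nat.zero_le _) (Finset.mem_univ a)
          have h2 := x.2
          omega⟩ : {μ : StrictPartition // μ.size ≤ p}))
      intro a b h
      apply Subtype.ext
      apply Subtype.ext
      funext t
      have := congrFun h t
      simpa [Subtype.ext_iff] using this
    have key : (PowerSeries.mk fun N =>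
        (Nat.card {L : Fin (k + 1) → StrictPartition //
          Conds (k + 1) j L ∧ (∑ a, (L a).size) = N} : ℚ)) =
        (PowerSeries.mk fun N => (Nat.card {μ : StrictPartition //
            μ.len = j 0 + (∑ b ∈ Finset.Ico 1 (k + 1), j b) ∧
            μ.parts.drop (j 0) = staircase (∑ b ∈ Finset.Ico 1 (k + 1), j b) ∧
            μ.size = N} : ℚ)) *
        (PowerSeries.mk fun N => (Nat.card {L : Fin k → StrictPartition //
            Conds k (fun b => j (b + 1)) L ∧ (∑ a, (L a).size) = N} : ℚ)) := by
      ext N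
      rw [PowerSeries.coeff_mk, PowerSeries.coeff_mul]
      simp only [PowerSeries.coeff_mk]
      rw [Nat.card_congr (stepEquiv k j N),
        card_conv (fun a : Hd k j => a.1.size) (fun b : Tl k j => ∑ a, (b.1 a).size) N]
      apply Finset.sum_congr rfl
      intro pq _
      congr 2
      · exact Nat.card_congr ((Equiv.subtypeSubtypeEquivSubtypeInter
          (fun μ : StrictPartition => μ.len = j 0 + (∑ b ∈ Finset.Ico 1 (k + 1), j b) ∧
            μ.parts.drop (j 0) = staircase (∑ b ∈ Finset.Ico 1 (k + 1), j b))
          (fun μ => μ.size = pq.1)).trans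
          (Equiv.subtypeEquivRight (fun μ => by tauto)))
      · exact Nat.card_congr (Equiv.subtypeSubtypeEquivSubtypeInter
          (fun L : Fin k → StrictPartition => Conds k (fun b => j (b + 1)) L)
          (fun L => (∑ a, (L a).size) = pq.2))
    rw [key, gfA (j 0) (∑ b ∈ Finset.Ico 1 (k + 1), j b), ih (fun b => j (b + 1))]
    rw [Finset.prod_range_succ']
    rw [mul_comm]
    congr 1
    apply Finset.prod_congr rfl
    intro a _
    rw [sum_Ico_shift j a k]
end Wgf


/-- `∑_{𝛌 ∈ W} q^{|𝛌|} = ∏_{a=1}^k q^{T(j_a+⋯+j_k)} / (q;q)_{j_a}` where `W` is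
the set of `k`-tuples of strict partitions with `ℓ(λ^{(i)}) = j_i + ⋯ + j_k`
whose last `ℓ(λ^{(i+1)})` parts form the staircase `Δ_{ℓ(λ^{(i+1)})}`, and
`T(m) = m(m+1)/2`. (Indices run over `0, …, k-1`.) -/
theorem W_gf (k : ℕ) (j : ℕ → ℕ) :
    PowerSeries.mk (fun N =>
        (Nat.card {L : Fin k → StrictPartition //
          (∀ a : Fin k, (L a).len = ∑ b ∈ Finset.Ico a.val k, j b) ∧
          (∀ (a : Fin k) (h : a.val + 1 < k),
            (L a).parts.drop ((L a).len - (L ⟨a.val + 1, h⟩).len) =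
              staircase ((L ⟨a.val + 1, h⟩).len)) ∧
          (∑ a, (L a).size) = N} : ℚ)) =
      ∏ a ∈ Finset.range k,
        (PowerSeries.X : PowerSeries ℚ) ^
            ((∑ b ∈ Finset.Ico a k, j b) * ((∑ b ∈ Finset.Ico a k, j b) + 1) / 2) *
          (qPoch (j a))⁻¹ := by
  rw [← Wgf.master k j]
  exact congrArg PowerSeries.mk (funext fun N => congrArg Nat.cast (Nat.card_congr
    (Equiv.subtypeEquivRight (fun L =>
      Iff.intro (fun h => ⟨⟨h.1, h.2.1⟩, h.2.2⟩) (fun h => ⟨h.1.1, h.1.2, h.2⟩)))))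
end

section
/- Let G(x,q) = ∑_{s≥0} q^{s(s+1)} x^{2s} / (q;q)_s. Then G satisfies the q-difference equation G(x,q) = (1 + x²q² + x²q³) G(xq, q) − x⁴q⁷ G(xq², q). -/
open Finset PowerSeries

/-- The power series `q` in `ℚ⟦q⟧`. -/
noncomputable def qq : PowerSeries ℚ := PowerSeries.X

/-- `G(x,q) = ∑_{s ≥ 0} q^{s(s+1)} x^{2s} / (q;q)_s`, as an element of `ℚ⟦q⟧⟦x⟧`:
the coefficient of `x^n` is `q^{s(s+1)}/(q;q)_s` if `n = 2s`, and `0` otherwise. -/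
noncomputable def Gser : PowerSeries (PowerSeries ℚ) :=
  PowerSeries.mk fun n =>
    if 2 ∣ n then qq ^ ((n / 2) * (n / 2 + 1)) * (qPoch (n / 2))⁻¹ else 0

/-- The coefficient `f_n` of `x^n` in
`F(x,q) = ∑_{s,t,u ≥ 0} q^{s(s+1)/2 + t(t+1) + 3u(u+1)/2 + st + su + 2tu}
  x^{s+2t+3u}/((q;q)_s (q;q)_t (q;q)_u)`,
i.e. the (finite) sum over `s, t, u ≥ 0` with `s + 2t + 3u = n`. -/
noncomputable def fcoef (n : ℕ) : PowerSeries ℚ :=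
  ∑ t ∈ Finset.range (n / 2 + 1), ∑ u ∈ Finset.range (n / 3 + 1),
    if 2 * t + 3 * u ≤ n then
      qq ^ ((n - 2 * t - 3 * u) * (n - 2 * t - 3 * u + 1) / 2 + t * (t + 1) +
            3 * (u * (u + 1) / 2) + (n - 2 * t - 3 * u) * t +
            (n - 2 * t - 3 * u) * u + 2 * t * u) *
        (qPoch (n - 2 * t - 3 * u))⁻¹ * (qPoch t)⁻¹ * (qPoch u)⁻¹
    else 0

/-- `F(x,q)` as an element of `ℚ⟦q⟧⟦x⟧`. -/
noncomputable def Fser : PowerSeries (PowerSeries ℚ) :=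
  PowerSeries.mk fcoef


lemma constCoeff_qPoch (n : ℕ) : PowerSeries.constantCoeff (qPoch n) = 1 := by
  induction n with
  | zero => simp [qPoch]
  | succ m ih => rw [qPoch, Finset.prod_range_succ, map_mul, ← qPoch, ih]; simp

lemma qPoch_succ (n : ℕ) : qPoch (n+1) = qPoch n * (1 - PowerSeries.X ^ (n+1)) := by
  rw [qPoch, Finset.prod_range_succ, ← qPoch]

lemma qPoch_mul_inv (n : ℕ) : qPoch n * (qPoch n)⁻¹ = 1 :=
  PowerSeries.mul_inv_cancel _ (by rw [constCoeff_qPoch]; norm_num)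

lemma inv_qPoch_succ (n : ℕ) :
    (qPoch n)⁻¹ = (1 - PowerSeries.X ^ (n+1)) * (qPoch (n+1))⁻¹ := by
  calc (qPoch n)⁻¹ = (qPoch n)⁻¹ * (qPoch (n+1) * (qPoch (n+1))⁻¹) := by
        rw [qPoch_mul_inv, mul_one]
    _ = (qPoch n)⁻¹ * qPoch n * ((1 - PowerSeries.X ^ (n+1)) * (qPoch (n+1))⁻¹) := by
        rw [qPoch_succ]; ring
    _ = (1 - PowerSeries.X ^ (n+1)) * (qPoch (n+1))⁻¹ := by
        rw [mul_comm ((qPoch n)⁻¹), qPoch_mul_inv, one_mul]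

/-- `G(x,q) = (1 + x²q² + x²q³) G(xq,q) - x⁴q⁷ G(xq²,q)`;
the substitution `x ↦ xq` is `PowerSeries.rescale q`. -/
theorem G_q_difference :
    Gser = (1 + PowerSeries.C (qq ^ 2 + qq ^ 3) * PowerSeries.X ^ 2) *
          PowerSeries.rescale qq Gser -
        PowerSeries.C (qq ^ 7) * PowerSeries.X ^ 4 *
          PowerSeries.rescale (qq ^ 2) Gser := by
  refine PowerSeries.ext fun n => ?_
  rw [show (1 + PowerSeries.C (qq ^ 2 + qq ^ 3) * PowerSeries.X ^ 2) *
          PowerSeries.rescale qq Gser -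
        PowerSeries.C (qq ^ 7) * PowerSeries.X ^ 4 *
          PowerSeries.rescale (qq ^ 2) Gser
      = PowerSeries.rescale qq Gser
        + (PowerSeries.C (qq ^ 2 + qq ^ 3) * PowerSeries.rescale qq Gser) * PowerSeries.X ^ 2
        - (PowerSeries.C (qq ^ 7) * PowerSeries.rescale (qq ^ 2) Gser) * PowerSeries.X ^ 4
      from by ring]
  rw [map_sub, map_add, PowerSeries.coeff_mul_X_pow', PowerSeries.coeff_mul_X_pow']
  simp only [PowerSeries.coeff_C_mul, PowerSeries.coeff_rescale, Gser, PowerSeries.coeff_mk]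
  rcases Nat.even_or_odd n with ⟨s, rfl⟩ | hodd
  · rw [show s + s = 2 * s from by ring]
    match s with
    | 0 => norm_num
    | 1 =>
      norm_num [qPoch, inv_one]
      have h : (1 - PowerSeries.X : PowerSeries ℚ) * (1 - PowerSeries.X)⁻¹ = 1 := by
        have := qPoch_mul_inv 1
        simpa [qPoch] using this
      unfold qq
      linear_combination (PowerSeries.X ^ 2 + PowerSeries.X ^ 3 : PowerSeries ℚ) * h
    | (m+2) =>
      rw [if_pos (by omega : 2 ≤ 2*(m+2)), if_pos (by omega : 4 ≤ 2*(m+2)),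
        show 2*(m+2) - 2 = 2*(m+1) from by omega, show 2*(m+2) - 4 = 2*m from by omega,
        if_pos ⟨m+2, rfl⟩, if_pos ⟨m+1, rfl⟩, if_pos ⟨m, rfl⟩,
        Nat.mul_div_cancel_left _ (by norm_num), Nat.mul_div_cancel_left _ (by norm_num),
        Nat.mul_div_cancel_left _ (by norm_num)]
      rw [inv_qPoch_succ m, inv_qPoch_succ (m+1), show m+1+1 = m+2 from rfl]
      rw [show (m+2)*(m+2+1) = m*(m+1)+(4*m+6) from by ring,
        show (m+1)*(m+1+1) = m*(m+1)+(2*m+2) from by ring]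
      unfold qq
      ring
  · obtain ⟨k, rfl⟩ := hodd
    match k with
    | 0 => norm_num
    | 1 => norm_num
    | (m+2) =>
      rw [show 2*(m+2)+1-2 = 2*(m+1)+1 from by omega,
        show 2*(m+2)+1-4 = 2*m+1 from by omega]
      have h1 : ¬ 2 ∣ (2*(m+2)+1) := by omega
      have h2 : ¬ 2 ∣ (2*(m+1)+1) := by omega
      have h3 : ¬ 2 ∣ (2*m+1) := by omega
      simp [h1, h2, h3]
end

section
/- Define g_{2s} = q^{s(s+1)}/(q;q)_s for s ≥ 0 and g_M = 0 for all other integers M. Then for every integer M, (1 − q^M) g_M − q^M(1+q) g_{M−2} + q^{2M−1} g_{M−4} = 0. -/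
open Finset

/-- `g_{2s} = q^{s(s+1)}/(q;q)_s` for `s ≥ 0`, and `g_M = 0` for all other
integers `M`, as rational functions in `q`. -/
noncomputable def gM (M : ℤ) : RatFunc ℚ :=
  if 0 ≤ M ∧ 2 ∣ M then
    (RatFunc.X : RatFunc ℚ) ^ (M.toNat / 2 * (M.toNat / 2 + 1)) /
      ∏ j ∈ Finset.range (M.toNat / 2), (1 - (RatFunc.X : RatFunc ℚ) ^ (j + 1))
  else 0

lemma one_sub_X_pow_ne (k : ℕ) : (1 - (RatFunc.X : RatFunc ℚ) ^ (k+1)) ≠ 0 := by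
  intro h
  have h1 : ((RatFunc.X : RatFunc ℚ)) ^ (k+1) = 1 := (sub_eq_zero.mp h).symm
  have h2 : (Polynomial.X : Polynomial ℚ) ^ (k+1) = 1 := by
    apply RatFunc.algebraMap_injective ℚ
    simp [h1]
  have := congrArg Polynomial.natDegree h2
  simp [Polynomial.natDegree_X_pow] at this

lemma gM_eq (n : ℕ) : gM (2*n) =
    (RatFunc.X : RatFunc ℚ) ^ (n*(n+1)) /
      ∏ j ∈ Finset.range n, (1 - (RatFunc.X : RatFunc ℚ) ^ (j + 1)) := by
  rw [gM, if_pos ⟨by positivity, ⟨n, by ring⟩⟩]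
  have h : ((2*(n:ℤ)).toNat) = 2*n := by omega
  have h2 : (2*n)/2 = n := by omega
  rw [h, h2]


/-- For every integer `M`, `(1 - q^M) g_M - q^M (1+q) g_{M-2} + q^{2M-1} g_{M-4} = 0`. -/
theorem gM_recurrence (M : ℤ) :
    (1 - (RatFunc.X : RatFunc ℚ) ^ M) * gM M -
      (RatFunc.X : RatFunc ℚ) ^ M * (1 + RatFunc.X) * gM (M - 2) +
      (RatFunc.X : RatFunc ℚ) ^ (2 * M - 1) * gM (M - 4) = 0 := by
  by_cases hM : 0 ≤ M ∧ 2 ∣ M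
  · obtain ⟨hpos, m, rfl⟩ := hM
    lift m to ℕ using (by omega) with n
    match n with
    | 0 =>
      have h1 : gM (2*(0:ℕ)) = 1 := by rw [gM_eq]; simp
      have h2 : gM ((2:ℤ)*(0:ℕ) - 2) = 0 := by rw [gM, if_neg]; omega
      have h3 : gM ((2:ℤ)*(0:ℕ) - 4) = 0 := by rw [gM, if_neg]; omega
      rw [h1, h2, h3]
      norm_num
    | 1 =>
      have h1 : gM (2*(1:ℕ)) = (RatFunc.X : RatFunc ℚ)^2 / (1 - RatFunc.X) := by
        rw [gM_eq]; norm_num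
      have e0 : ((2:ℤ)*(1:ℕ) - 2) = 2*((0:ℕ):ℤ) := by norm_num
      have h2 : gM ((2:ℤ)*(1:ℕ) - 2) = 1 := by rw [e0, gM_eq]; simp
      have h3 : gM ((2:ℤ)*(1:ℕ) - 4) = 0 := by rw [gM, if_neg]; omega
      rw [h1, h2, h3]
      have hX : (1 - (RatFunc.X : RatFunc ℚ)) ≠ 0 := by
        have := one_sub_X_pow_ne 0; simpa using this
      have e1 : ((RatFunc.X : RatFunc ℚ)) ^ ((2:ℤ)*((1:ℕ):ℤ)) = RatFunc.X ^ (2:ℕ) := by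
        rw [show ((2:ℤ)*((1:ℕ):ℤ)) = ((2:ℕ):ℤ) by norm_num, zpow_natCast]
      rw [e1]
      field_simp
      ring
    | (n+2) =>
      have e1 : ((2:ℤ)*((n+2:ℕ):ℤ)) = 2*((n+2:ℕ):ℤ) := rfl
      have e2 : ((2:ℤ)*((n+2:ℕ):ℤ) - 2) = 2*((n+1:ℕ):ℤ) := by push_cast; ring
      have e3 : ((2:ℤ)*((n+2:ℕ):ℤ) - 4) = 2*((n:ℕ):ℤ) := by push_cast; ring
      rw [show ((2:ℤ)*((n+2:ℕ):ℤ) - 2) = 2*((n+1:ℕ):ℤ) from e2,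
          show ((2:ℤ)*((n+2:ℕ):ℤ) - 4) = 2*((n:ℕ):ℤ) from e3,
          gM_eq, gM_eq, gM_eq]
      set P : RatFunc ℚ := ∏ j ∈ Finset.range n, (1 - (RatFunc.X : RatFunc ℚ) ^ (j + 1)) with hP
      have hPne : P ≠ 0 := Finset.prod_ne_zero_iff.mpr (fun j _ => one_sub_X_pow_ne j)
      have hp1 : ∏ j ∈ Finset.range (n+1), (1 - (RatFunc.X : RatFunc ℚ) ^ (j + 1))
          = P * (1 - RatFunc.X ^ (n+1)) := by rw [Finset.prod_range_succ]
      have hp2 : ∏ j ∈ Finset.range (n+2), (1 - (RatFunc.X : RatFunc ℚ) ^ (j + 1))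
          = P * (1 - RatFunc.X ^ (n+1)) * (1 - RatFunc.X ^ (n+2)) := by
        rw [Finset.prod_range_succ, hp1]
      rw [hp1, hp2]
      have hn1 : (1 - (RatFunc.X : RatFunc ℚ) ^ (n+1)) ≠ 0 := one_sub_X_pow_ne n
      have hn2 : (1 - (RatFunc.X : RatFunc ℚ) ^ (n+2)) ≠ 0 := one_sub_X_pow_ne (n+1)
      have ez1 : ((RatFunc.X : RatFunc ℚ)) ^ ((2:ℤ)*((n+2:ℕ):ℤ)) = RatFunc.X ^ (2*n+4) := by
        rw [show ((2:ℤ)*((n+2:ℕ):ℤ)) = ((2*n+4:ℕ):ℤ) by push_cast; ring, zpow_natCast]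
      have ez2 : ((RatFunc.X : RatFunc ℚ)) ^ (2*((2:ℤ)*((n+2:ℕ):ℤ)) - 1) = RatFunc.X ^ (4*n+7) := by
        rw [show (2*((2:ℤ)*((n+2:ℕ):ℤ)) - 1) = ((4*n+7:ℕ):ℤ) by push_cast; ring, zpow_natCast]
      rw [ez1, ez2]
      field_simp
      ring
  · have h1 : gM M = 0 := by rw [gM, if_neg hM]
    have h2 : gM (M-2) = 0 := by rw [gM, if_neg]; omega
    have h3 : gM (M-4) = 0 := by rw [gM, if_neg]; omega
    rw [h1, h2, h3]
    ring
end
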